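/- Let X be a compact metric space, α : X → X a homeomorphism, 𝒱 a line bundle, ℰ = Γ(𝒱,α), Y ⊆ X a nonempty closed subset, and ℰ_Y = C_0(X∖Y)·ℰ the orbit-breaking bimodule. Then for ξ ∈ ℰ: ξ ∈ ℰ_Y if and only if ξ vanishes on α^{-1}(Y). -/

import Mathlib

/-!
STATEMENT 13. Let `X` be a compact metric space, `α : X → X` a homeomorphism, `𝒱` a
Hermitian line bundle, `ℰ = Γ(𝒱,α)` and `Y ⊆ X` a nonempty closed subset.  The
orbit-breaking bimodule `ℰ_Y = C₀(X∖Y)·ℰ` is the closed linear span of the elements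
`f·ξ = ξ·(f∘α)` with `f ∈ C₀(X∖Y)` (i.e. `f` vanishing on `Y`) and `ξ ∈ ℰ`.  Then for
a continuous section `ξ` of `𝒱`: `ξ ∈ ℰ_Y` if and only if `ξ` vanishes on `α⁻¹(Y)`.
Membership in the closed span is expressed by uniform approximation: for every `ε > 0`
there are `f_1, …, f_m` vanishing on `Y` and sections `η_1, …, η_m` with
`‖ξ(x) − Σ_i f_i(α x) • η_i(x)‖ ≤ ε` for all `x`.
-/

open Bundle

section Aux

open Set

variable {X : Type*} [MetricSpace X] [CompactSpace X]
    {V : X → Type*} [∀ x, NormedAddCommGroup (V x)] [∀ x, InnerProductSpace ℂ (V x)]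
    [TopologicalSpace (Bundle.TotalSpace ℂ V)] [FiberBundle ℂ V] [VectorBundle ℂ ℂ V]

set_option linter.unusedSectionVars false

/-- The zero section of a vector bundle is continuous. -/
lemma st13_aux_zeroSec :
    Continuous fun x => (Bundle.TotalSpace.mk x (0 : V x) : Bundle.TotalSpace ℂ V) := by
  rw [continuous_iff_continuousAt]
  intro x₀
  set e := trivializationAt ℂ V x₀ with he
  have hx₀ : x₀ ∈ e.baseSet := FiberBundle.mem_baseSet_trivializationAt ℂ V x₀
  have hcont : ContinuousOn
      (fun x => (Bundle.TotalSpace.mk x (0 : V x) : Bundle.TotalSpace ℂ V)) e.baseSet := by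
    have hmap : MapsTo (fun x => (x, (0:ℂ))) e.baseSet (e.baseSet ×ˢ univ) :=
      fun x hx => ⟨hx, mem_univ _⟩
    have h := e.continuousOn_symm.comp
      ((continuous_id.prodMk continuous_const).continuousOn :
        ContinuousOn (fun x : X => (x, (0:ℂ))) e.baseSet) hmap
    refine h.congr fun x hx => ?_
    show Bundle.TotalSpace.mk x 0 = Bundle.TotalSpace.mk x (e.symm x 0)
    have h0 : e.symm x 0 = 0 := by rw [← e.symmL_apply (R := ℂ) hx]; exact map_zero _
    rw [h0]
  exact hcont.continuousAt (e.open_baseSet.mem_nhds hx₀)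

/-- Continuity of the coordinate of a continuous section in a trivialization. -/
lemma st13_aux_coord (ξ : ∀ x, V x)
    (hξ : Continuous fun x => (Bundle.TotalSpace.mk x (ξ x) : Bundle.TotalSpace ℂ V))
    (e : Trivialization ℂ (Bundle.TotalSpace.proj : Bundle.TotalSpace ℂ V → X)) :
    ContinuousOn (fun x => (e ⟨x, ξ x⟩).2) e.baseSet :=
  (e.continuousOn.comp hξ.continuousOn fun x hx => e.mem_source.mpr hx).snd

/-- A coefficient function supported inside the base set of a trivialization gives a
continuous global section via `e.symm`. -/
lemma st13_aux_eta (e : Trivialization ℂ (Bundle.TotalSpace.proj : Bundle.TotalSpace ℂ V → X))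
    [e.IsLinear ℂ] (g : X → ℂ) (hg : Continuous g) (hsupp : tsupport g ⊆ e.baseSet) :
    Continuous fun x => (Bundle.TotalSpace.mk x (e.symmL ℂ x (g x)) : Bundle.TotalSpace ℂ V) := by
  rw [continuous_iff_continuousAt]
  intro x₀
  by_cases hx₀ : x₀ ∈ e.baseSet
  · apply ContinuousOn.continuousAt _ (e.open_baseSet.mem_nhds hx₀)
    have h := e.continuousOn_symm.comp
      ((continuous_id.prodMk hg).continuousOn :
        ContinuousOn (fun x : X => (x, g x)) e.baseSet)
      (fun x hx => ⟨hx, mem_univ _⟩)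
    exact h.congr fun x hx => by rw [e.symmL_apply hx]; rfl
  · have hopen : IsOpen (tsupport g)ᶜ := (isClosed_tsupport g).isOpen_compl
    have hx₀' : x₀ ∈ (tsupport g)ᶜ := fun hmem => hx₀ (hsupp hmem)
    apply ContinuousOn.continuousAt _ (hopen.mem_nhds hx₀')
    refine (st13_aux_zeroSec.continuousOn).congr fun x hx => ?_
    have hgx : g x = 0 := image_eq_zero_of_notMem_tsupport hx
    show Bundle.TotalSpace.mk x (e.symmL ℂ x (g x)) = Bundle.TotalSpace.mk x 0
    rw [hgx]
    have h0 : e.symmL ℂ x 0 = 0 := map_zero _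
    rw [h0]

end Aux

theorem statement13
    (X : Type*) [MetricSpace X] [CompactSpace X]
    (α : X ≃ₜ X)
    (V : X → Type*) [∀ x, NormedAddCommGroup (V x)] [∀ x, InnerProductSpace ℂ (V x)]
    [TopologicalSpace (Bundle.TotalSpace ℂ V)] [FiberBundle ℂ V] [VectorBundle ℂ ℂ V]
    (Y : Set X) (hYne : Y.Nonempty) (hYcl : IsClosed Y)
    (ξ : {s : ∀ x, V x //
        Continuous fun x => (Bundle.TotalSpace.mk x (s x) : Bundle.TotalSpace ℂ V)}) :
    -- ξ ∈ ℰ_Y = C₀(X∖Y)·ℰ (the closed linear span of {f·η : f|_Y = 0, η ∈ ℰ}) …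
    (∀ ε > (0:ℝ), ∃ (m : ℕ) (f : Fin m → C(X, ℂ))
        (η : Fin m → {s : ∀ x, V x //
          Continuous fun x => (Bundle.TotalSpace.mk x (s x) : Bundle.TotalSpace ℂ V)}),
      (∀ i, ∀ y ∈ Y, f i y = 0) ∧
      ∀ x : X, ‖ξ.1 x - ∑ i, f i (α x) • (η i).1 x‖ ≤ ε)
    ↔
    -- … if and only if ξ vanishes on α⁻¹(Y)
    (∀ x : X, α x ∈ Y → ξ.1 x = 0) := by
  constructor
  · -- easy direction
    intro h x hx
    rw [← norm_le_zero_iff]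
    refine le_of_forall_pos_le_add fun ε hε => ?_
    obtain ⟨m, f, η, hf, hb⟩ := h ε hε
    have hbx := hb x
    have hsum : (∑ i, f i (α x) • (η i).1 x) = 0 := by
      refine Finset.sum_eq_zero fun i _ => ?_
      rw [hf i _ hx, zero_smul]
    rw [hsum, sub_zero] at hbx
    simpa using hbx
  · -- hard direction
    intro hvan
    classical
    -- trivializations
    set e : X → Trivialization ℂ (Bundle.TotalSpace.proj : Bundle.TotalSpace ℂ V → X) :=
      fun x => trivializationAt ℂ V x with he
    have hmem : ∀ x : X, x ∈ (e x).baseSet :=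
      fun x => FiberBundle.mem_baseSet_trivializationAt ℂ V x
    -- Urysohn bumps at each point
    have hUry : ∀ x : X, ∃ f : C(X, ℝ), tsupport f ⊆ (e x).baseSet ∧
        Set.EqOn f 1 {x} ∧ ∀ y, f y ∈ Set.Icc (0:ℝ) 1 := fun x =>
      exists_tsupport_one_of_isOpen_isClosed (e x).open_baseSet
        isClosed_closure.isCompact isClosed_singleton
        (Set.singleton_subset_iff.mpr (hmem x))
    choose F hFsupp hF1 hF01 using hUry
    -- open cover by positivity sets
    have hcover : Set.univ ⊆ ⋃ x : X, (F x) ⁻¹' Set.Ioi (0:ℝ) := by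
      intro y _
      exact Set.mem_iUnion.mpr ⟨y, by simp [hF1 y rfl]⟩
    obtain ⟨t, ht⟩ := isCompact_univ.elim_finite_subcover
      (fun x : X => (F x) ⁻¹' Set.Ioi (0:ℝ))
      (fun x => (F x).continuous.isOpen_preimage _ isOpen_Ioi) hcover
    -- normalizing sum
    set σ : X → ℝ := fun y => ∑ j ∈ t, F j y with hσ
    have hσcont : Continuous σ := by
      exact continuous_finset_sum _ fun j _ => (F j).continuous
    have hσpos : ∀ y, 0 < σ y := by
      intro y
      obtain ⟨j, hjt, hjy⟩ := Set.mem_iUnion₂.mp (ht (Set.mem_univ y))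
      exact Finset.sum_pos' (fun i _ => (hF01 i y).1) ⟨j, hjt, hjy⟩
    -- second Urysohn functions
    have hUry2 : ∀ x : X, ∃ g : C(X, ℝ), tsupport g ⊆ (e x).baseSet ∧
        Set.EqOn g 1 (tsupport (F x)) ∧ ∀ y, g y ∈ Set.Icc (0:ℝ) 1 := fun x =>
      exists_tsupport_one_of_isOpen_isClosed (e x).open_baseSet
        isClosed_closure.isCompact (isClosed_tsupport _) (hFsupp x)
    choose G hGsupp hG1 hG01 using hUry2
    -- coordinate functions
    set c : X → X → ℂ := fun j y => ((e j) ⟨y, ξ.1 y⟩).2 with hc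
    -- coefficient functions
    set g : X → X → ℂ := fun j y => ((G j y : ℝ) : ℂ) * c j y with hgdef
    have hgcont : ∀ j, Continuous (g j) := by
      intro j
      rw [continuous_iff_continuousAt]
      intro x₀
      by_cases hx₀ : x₀ ∈ (e j).baseSet
      · apply ContinuousOn.continuousAt _ ((e j).open_baseSet.mem_nhds hx₀)
        exact (Complex.continuous_ofReal.comp (G j).continuous).continuousOn.mul
          (st13_aux_coord ξ.1 ξ.2 (e j))
      · have hopen : IsOpen (tsupport (G j))ᶜ := (isClosed_tsupport _).isOpen_compl
        have hx₀' : x₀ ∈ (tsupport (G j))ᶜ := fun hmem => hx₀ (hGsupp j hmem)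
        apply ContinuousOn.continuousAt _ (hopen.mem_nhds hx₀')
        refine (continuousOn_const (c := (0:ℂ))).congr fun x hx => ?_
        have : G j x = 0 := image_eq_zero_of_notMem_tsupport hx
        show g j x = (0:ℂ)
        simp [hgdef, this]
      -- done
    -- the scalar weights
    set ρ : X → X → ℝ := fun j y => F j y / σ y with hρ
    have hρcont : ∀ j, Continuous fun y => ((ρ j y : ℝ) : ℂ) := fun j =>
      Complex.continuous_ofReal.comp ((F j).continuous.div hσcont fun y => (hσpos y).ne')
    have hρsupp : ∀ j, tsupport (fun y => ((ρ j y : ℝ) : ℂ)) ⊆ (e j).baseSet := by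
      intro j
      refine subset_trans ?_ (hFsupp j)
      apply closure_mono
      intro y hy
      simp only [Function.mem_support] at hy ⊢
      intro h0
      exact hy (by simp [hρ, h0])
    -- the sections
    set η : X → {s : ∀ x, V x //
        Continuous fun x => (Bundle.TotalSpace.mk x (s x) : Bundle.TotalSpace ℂ V)} :=
      fun j => ⟨fun y => (e j).symmL ℂ y ((ρ j y : ℝ) : ℂ),
        st13_aux_eta (e j) _ (hρcont j) (hρsupp j)⟩ with hη
    -- vanishing of g on the preimage of Y
    have hgvan : ∀ j, ∀ x : X, α x ∈ Y → g j x = 0 := by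
      intro j x hx
      by_cases hxb : x ∈ (e j).baseSet
      · have hz : ξ.1 x = 0 := hvan x hx
        have : c j x = 0 := by
          show ((e j) ⟨x, ξ.1 x⟩).2 = 0
          rw [hz]
          have := (e j).zeroSection (R := ℂ) hxb
          simpa [Bundle.zeroSection] using congrArg Prod.snd this
        simp [hgdef, this]
      · have : G j x = 0 :=
          image_eq_zero_of_notMem_tsupport fun hmem => hxb (hGsupp j hmem)
        simp [hgdef, this]
    -- exact reconstruction
    have hrec : ∀ x : X, ξ.1 x = ∑ j ∈ t, g j x • (η j).1 x := by
      intro x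
      have hterm : ∀ j ∈ t, g j x • (η j).1 x = ((ρ j x : ℝ) : ℂ) • ξ.1 x := by
        intro j _
        by_cases hFx : F j x = 0
        · have hρ0 : ρ j x = 0 := by simp [hρ, hFx]
          have h0 : (η j).1 x = 0 := by
            show (e j).symmL ℂ x ((ρ j x : ℝ) : ℂ) = 0
            rw [hρ0]
            exact map_zero _
          rw [h0, hρ0]
          simp
        · have hxs : x ∈ tsupport (F j) := subset_closure (by exact hFx)
          have hxb : x ∈ (e j).baseSet := hFsupp j hxs
          have hGx : G j x = 1 := hG1 j hxs
          have hgx : g j x = c j x := by simp [hgdef, hGx]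
          have hsymm_smul : ∀ (a z : ℂ),
              (e j).symm x (a * z) = a • (e j).symm x z := by
            intro a z
            have h1 : (e j).symm x (a * z) = ((e j).symmL ℂ x) (a * z) :=
                ((e j).symmL_apply hxb _).symm
            have h2 : (e j).symm x z = ((e j).symmL ℂ x) z := ((e j).symmL_apply hxb _).symm
            rw [h1, h2, show a * z = a • z from rfl, map_smul]
          have hrecon : (e j).symm x (c j x) = ξ.1 x :=
            (e j).symm_apply_apply_mk hxb _
          calc g j x • (η j).1 x
              = c j x • (e j).symm x ((ρ j x : ℝ) : ℂ) := by
                rw [hgx]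
                show c j x • (e j).symmL ℂ x ((ρ j x : ℝ) : ℂ) = _
                rw [(e j).symmL_apply hxb]
            _ = (e j).symm x (c j x * ((ρ j x : ℝ) : ℂ)) := (hsymm_smul _ _).symm
            _ = (e j).symm x (((ρ j x : ℝ) : ℂ) * c j x) := by ring_nf
            _ = ((ρ j x : ℝ) : ℂ) • (e j).symm x (c j x) := hsymm_smul _ _
            _ = ((ρ j x : ℝ) : ℂ) • ξ.1 x := by rw [hrecon]
      rw [Finset.sum_congr rfl hterm, ← Finset.sum_smul]
      have : (∑ j ∈ t, ((ρ j x : ℝ) : ℂ)) = 1 := by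
        rw [← Complex.ofReal_sum]
        have : (∑ j ∈ t, ρ j x) = 1 := by
          rw [hρ]
          simp only
          rw [← Finset.sum_div, div_self (hσpos x).ne']
        rw [this, Complex.ofReal_one]
      rw [this, one_smul]
    -- conclude
    intro ε hε
    refine ⟨t.card, fun i => ⟨fun y => g (t.equivFin.symm i) (α.symm y), ?_⟩,
      fun i => η (t.equivFin.symm i), ?_, ?_⟩
    · exact (hgcont _).comp α.symm.continuous
    · intro i y hy
      show g (t.equivFin.symm i) (α.symm y) = 0
      exact hgvan _ _ (by simpa using hy)
    · intro x
      have hsum : (∑ i : Fin t.card,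
          g ((t.equivFin.symm i) : X) (α.symm (α x)) • (η ((t.equivFin.symm i) : X)).1 x)
          = ∑ j ∈ t, g j x • (η j).1 x := by
        rw [show α.symm (α x) = x from α.symm_apply_apply x]
        rw [← Finset.sum_coe_sort t (fun j => g j x • (η j).1 x)]
        exact Fintype.sum_equiv t.equivFin.symm _ _ fun i => rfl
      calc ‖ξ.1 x - ∑ i : Fin t.card,
            g ((t.equivFin.symm i) : X) (α.symm (α x)) • (η ((t.equivFin.symm i) : X)).1 x‖
          = ‖ξ.1 x - ∑ j ∈ t, g j x • (η j).1 x‖ := by rw [hsum]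
        _ = 0 := by rw [← hrec x, sub_self, norm_zero]
        _ ≤ ε := le_of_lt hε
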